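/- Discrete Nash–Sobolev inequality (Lemma 3.1): there exists a universal constant C > 0 such that for every function φ : ℤ → ℂ with Σ_{x∈ℤ} |φ(x)| < ∞, one has Σ_{x∈ℤ} |φ(x)|² ≤ C · (Σ_{x∈ℤ} |φ(x)|)^(4/3) · (Σ_{x∈ℤ} |φ(x+1) − φ(x)|²)^(1/3). -/

import Mathlib

open Filter Finset

set_option maxHeartbeats 1600000 in
/-- Discrete Nash–Sobolev inequality: there is a universal constant `C > 0` such that for
every absolutely summable `φ : ℤ → ℂ`,
`Σ |φ x|² ≤ C * (Σ |φ x|)^(4/3) * (Σ |φ (x+1) - φ x|²)^(1/3)`. -/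
theorem discrete_nash_sobolev :
    ∃ C : ℝ, 0 < C ∧
      ∀ φ : ℤ → ℂ, Summable (fun x : ℤ => ‖φ x‖) →
        (∑' x : ℤ, ‖φ x‖ ^ 2) ≤
          C * (∑' x : ℤ, ‖φ x‖) ^ ((4 : ℝ) / 3) *
            (∑' x : ℤ, ‖φ (x + 1) - φ x‖ ^ 2) ^ ((1 : ℝ) / 3) := by
  refine ⟨2, by norm_num, fun φ hA => ?_⟩
  set a : ℤ → ℝ := fun x => ‖φ x‖ with ha_def
  set d : ℤ → ℝ := fun x => ‖φ (x + 1) - φ x‖ with hd_def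
  have ha_nn : ∀ x, 0 ≤ a x := fun x => norm_nonneg _
  have hd_nn : ∀ x, 0 ≤ d x := fun x => norm_nonneg _
  set A := ∑' x, a x with hA_def
  have hA0 : 0 ≤ A := tsum_nonneg ha_nn
  have habd : ∀ x, a x ≤ A := fun x => hA.le_tsum x fun y _ => ha_nn y
  have hS2sum : Summable fun x => a x ^ 2 := by
    refine (hA.mul_left A).of_nonneg_of_le (fun x => sq_nonneg _) fun x => ?_
    rw [sq]; exact mul_le_mul_of_nonneg_right (habd x) (ha_nn x)
  have hS2shift : Summable fun x : ℤ => a (x + 1) ^ 2 :=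
    (Equiv.addRight (1:ℤ)).summable_iff.mpr hS2sum
  have hshift_eq : ∑' x : ℤ, a (x + 1) ^ 2 = ∑' x, a x ^ 2 :=
    (Equiv.addRight (1:ℤ)).tsum_eq fun x => a x ^ 2
  set S := ∑' x, a x ^ 2 with hS_def
  have hS0 : 0 ≤ S := tsum_nonneg fun x => sq_nonneg _
  have hd_le : ∀ x, d x ≤ a (x + 1) + a x := fun x => by
    simp only [hd_def, ha_def]; exact norm_sub_le _ _
  have hd_ge : ∀ y, a y - a (y + 1) ≤ d y := fun y => by
    simp only [hd_def, ha_def]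
    rw [norm_sub_rev]; exact norm_sub_norm_le _ _
  have hBsum : Summable fun x => d x ^ 2 := by
    refine ((hS2shift.mul_left 2).add (hS2sum.mul_left 2)).of_nonneg_of_le
      (fun x => sq_nonneg _) fun x => ?_
    nlinarith [hd_le x, hd_nn x, sq_nonneg (a (x+1) - a x), ha_nn x, ha_nn (x+1)]
  set B := ∑' x, d x ^ 2 with hB_def
  have hB0 : 0 ≤ B := tsum_nonneg fun x => sq_nonneg _
  set g : ℤ → ℝ := fun y => (a y + a (y + 1)) * d y with hg_def
  have hg_nn : ∀ y, 0 ≤ g y := fun y => mul_nonneg (add_nonneg (ha_nn y) (ha_nn (y + 1))) (hd_nn y)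
  have hgsum : Summable g := by
    refine ((hS2sum.add hS2shift).add hBsum).of_nonneg_of_le hg_nn fun y => ?_
    have := hd_nn y; have := ha_nn y; have := ha_nn (y+1)
    simp only [hg_def]
    nlinarith [sq_nonneg (a y + a (y + 1) - d y), sq_nonneg (a y - a (y + 1))]
  set T := ∑' y, g y with hT_def
  have hT0 : 0 ≤ T := tsum_nonneg hg_nn
  -- tendsto of a along shifted naturals
  have htend : ∀ x : ℤ, Tendsto (fun n : ℕ => a (x + n)) atTop (nhds 0) := by
    intro x
    have h1 : Tendsto a cofinite (nhds 0) := hA.tendsto_cofinite_zero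
    have h2 : Tendsto (fun n : ℕ => (x + n : ℤ)) atTop atTop :=
      tendsto_atTop_add_const_left _ x tendsto_natCast_atTop_atTop
    exact h1.comp (h2.mono_right (by rw [Int.cofinite_eq]; exact le_sup_right))
  -- key pointwise bound
  have key : ∀ x : ℤ, a x ^ 2 ≤ T := by
    intro x
    have hmono : ∀ n : ℕ, a x ^ 2 ≤ a (x + n) ^ 2 + T := by
      intro n
      have htel : ∑ i ∈ Finset.range n, (a (x + i) ^ 2 - a (x + (i+1:ℕ)) ^ 2)
          = a (x + (0:ℕ)) ^ 2 - a (x + n) ^ 2 :=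
        Finset.sum_range_sub' (fun i : ℕ => a (x + i) ^ 2) n
      have hterm : ∀ i : ℕ, a (x + i) ^ 2 - a (x + (i+1:ℕ)) ^ 2 ≤ g (x + i) := by
        intro i
        have h1 : a (x + i) - a (x + i + 1) ≤ d (x + i) := hd_ge (x + i)
        have h2 : (x + (i+1:ℕ) : ℤ) = x + i + 1 := by push_cast; ring
        rw [h2]
        have := ha_nn (x + i); have := ha_nn (x + i + 1)
        simp only [hg_def]
        nlinarith [hd_nn (x + i)]
      have hinj : Function.Injective (fun i : ℕ => x + (i : ℤ)) := by
        intro i j h; simpa using h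
      have hgs : Summable fun i : ℕ => g (x + i) := hgsum.comp_injective hinj
      have hsum_le : ∑ i ∈ Finset.range n, g (x + i) ≤ ∑' i : ℕ, g (x + i) :=
        hgs.sum_le_tsum _ (fun i _ => hg_nn _)
      have hts : ∑' i : ℕ, g (x + i) ≤ T :=
        hgs.tsum_le_tsum_of_inj _ hinj (fun c _ => hg_nn c) (fun i => le_refl _) hgsum
      have hsum2 : ∑ i ∈ Finset.range n, (a (x + i) ^ 2 - a (x + (i+1:ℕ)) ^ 2)
          ≤ ∑ i ∈ Finset.range n, g (x + i) :=
        Finset.sum_le_sum fun i _ => hterm i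
      rw [htel] at hsum2
      simp only [Nat.cast_zero, add_zero] at hsum2
      linarith
    have hlim : Tendsto (fun n : ℕ => a (x + n) ^ 2 + T) atTop (nhds (0 ^ 2 + T)) :=
      (((htend x).pow 2).add_const T)
    have : a x ^ 2 ≤ 0 ^ 2 + T := ge_of_tendsto hlim (Eventually.of_forall hmono)
    simpa using this
  -- S ≤ √T * A
  have hS_le : S ≤ Real.sqrt T * A := by
    rw [hS_def, hA_def, ← tsum_mul_left]
    refine hS2sum.tsum_le_tsum (fun x => ?_) (hA.mul_left _)
    have hx : a x ≤ Real.sqrt T := by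
      rw [show a x = Real.sqrt (a x ^ 2) by rw [Real.sqrt_sq (ha_nn x)]]
      exact Real.sqrt_le_sqrt (key x)
    rw [sq]; exact mul_le_mul_of_nonneg_right hx (ha_nn x)
  -- ε bound on T
  have hT_le : ∀ ε : ℝ, 0 < ε → T ≤ 4 * ε * S + B / (4 * ε) := by
    intro ε hε
    have hterm : ∀ y, g y ≤ ε * (2 * a y ^ 2 + 2 * a (y+1) ^ 2) + d y ^ 2 / (4 * ε) := by
      intro y
      have h4 : d y ^ 2 / (4 * ε) * (4 * ε) = d y ^ 2 := by field_simp
      simp only [hg_def]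
      nlinarith [sq_nonneg (2 * ε * (a y + a (y+1)) - d y), sq_nonneg (a y - a (y+1)),
        mul_pos hε hε, ha_nn y, ha_nn (y+1), hd_nn y]
    have hsum1 : Summable fun y => ε * (2 * a y ^ 2 + 2 * a (y+1) ^ 2) :=
      (((hS2sum.mul_left 2).add (hS2shift.mul_left 2)).mul_left ε)
    have hsum2 : Summable fun y : ℤ => d y ^ 2 / (4 * ε) := hBsum.div_const _
    calc T ≤ ∑' y, (ε * (2 * a y ^ 2 + 2 * a (y+1) ^ 2) + d y ^ 2 / (4 * ε)) :=
          hgsum.tsum_le_tsum hterm (hsum1.add hsum2)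
      _ = ε * (2 * S + 2 * S) + B / (4 * ε) := by
          rw [hsum1.tsum_add hsum2, tsum_mul_left,
            (hS2sum.mul_left 2).tsum_add ((hS2shift.mul_left 2)),
            tsum_mul_left, tsum_mul_left, hshift_eq, tsum_div_const]
      _ = 4 * ε * S + B / (4 * ε) := by ring
  -- now the algebra
  rcases eq_or_lt_of_le hB0 with hB | hB
  · -- B = 0 : show T ≤ 0, hence S = 0
    have hT_nonpos : T ≤ 0 := by
      have h : ∀ δ : ℝ, 0 < δ → T ≤ 0 + δ := by
        intro δ hδ
        rcases eq_or_lt_of_le hS0 with hS | hS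
        · have := hT_le 1 one_pos
          rw [← hS, ← hB] at this; simpa using this.trans (by linarith)
        · have hε : 0 < δ / (4 * S) := by positivity
          have := hT_le (δ / (4 * S)) hε
          rw [← hB] at this
          have h2 : 4 * (δ / (4 * S)) * S = δ := by field_simp
          simp only [zero_div, add_zero] at this
          rw [h2] at this; linarith
      linarith [le_of_forall_pos_le_add h]
    have hT_eq : T = 0 := le_antisymm hT_nonpos hT0
    have hSz : S = 0 := by
      have : S ≤ 0 := by
        have := hS_le; rw [hT_eq, Real.sqrt_zero, zero_mul] at this; exact this
      linarith
    rw [hSz, ← hB]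
    rw [Real.zero_rpow (by norm_num : (1:ℝ)/3 ≠ 0)]
    simp
  · rcases eq_or_lt_of_le hS0 with hS | hS
    · rw [← hS]; positivity
    · -- main case: S > 0, B > 0
      have hsB := Real.sqrt_pos.mpr hB
      have hsS := Real.sqrt_pos.mpr hS
      set ε := Real.sqrt B / (4 * Real.sqrt S) with hε_def
      have hε : 0 < ε := by positivity
      have hT2 : T ≤ 2 * Real.sqrt B * Real.sqrt S := by
        have h := hT_le ε hε
        have e1 : 4 * ε * S = Real.sqrt B * Real.sqrt S := by
          rw [hε_def]
          field_simp
          linear_combination (-1 : ℝ) * Real.mul_self_sqrt hS0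
        have e2 : B / (4 * ε) = Real.sqrt B * Real.sqrt S := by
          rw [hε_def]
          field_simp
          linear_combination (-1 : ℝ) * Real.mul_self_sqrt hB0
        rw [e1, e2] at h; linarith
      -- S^2 ≤ T * A^2
      have hS2 : S ^ 2 ≤ T * A ^ 2 := by
        have h := hS_le
        have hsT : 0 ≤ Real.sqrt T := Real.sqrt_nonneg _
        nlinarith [Real.sq_sqrt hT0, Real.sqrt_nonneg T]
      have hS4 : S ^ 4 ≤ 4 * B * S * A ^ 4 := by
        have h1 : S ^ 2 ≤ 2 * Real.sqrt B * Real.sqrt S * A ^ 2 := by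
          nlinarith [sq_nonneg A]
        have e3 : (2 * Real.sqrt B * Real.sqrt S * A ^ 2) * (2 * Real.sqrt B * Real.sqrt S * A ^ 2)
            = 4 * B * S * A ^ 4 := by
          have hb := Real.mul_self_sqrt hB0
          have hs := Real.mul_self_sqrt hS0
          linear_combination (4 * A ^ 4 * (Real.sqrt S * Real.sqrt S)) * hb + (4 * A ^ 4 * B) * hs
        calc S ^ 4 = S ^ 2 * S ^ 2 := by ring
          _ ≤ (2 * Real.sqrt B * Real.sqrt S * A ^ 2) * (2 * Real.sqrt B * Real.sqrt S * A ^ 2) :=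
              mul_le_mul h1 h1 (sq_nonneg S) (by positivity)
          _ = 4 * B * S * A ^ 4 := e3
      have hS3 : S ^ 3 ≤ 4 * A ^ 4 * B := by
        have : S * S ^ 3 ≤ S * (4 * A ^ 4 * B) := by nlinarith
        exact le_of_mul_le_mul_left this hS
      -- conclude via cubes
      have hRHS0 : 0 ≤ 2 * A ^ ((4:ℝ)/3) * B ^ ((1:ℝ)/3) := by positivity
      refine (pow_le_pow_iff_left₀ hS0 hRHS0 (by norm_num : 3 ≠ 0)).mp ?_
      have hcube : (2 * A ^ ((4:ℝ)/3) * B ^ ((1:ℝ)/3)) ^ 3 = 8 * A ^ 4 * B := by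
        rw [mul_pow, mul_pow, ← Real.rpow_natCast (A ^ ((4:ℝ)/3)) 3,
          ← Real.rpow_natCast (B ^ ((1:ℝ)/3)) 3, ← Real.rpow_mul hA0, ← Real.rpow_mul hB0,
          show ((4:ℝ)/3 * (3:ℕ)) = ((4:ℕ):ℝ) by push_cast; ring,
          show ((1:ℝ)/3 * (3:ℕ)) = ((1:ℕ):ℝ) by push_cast; ring,
          Real.rpow_natCast, Real.rpow_natCast]
        ring
      rw [hcube]
      nlinarith [mul_nonneg (pow_nonneg hA0 4) hB0]
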